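/- Bilinear evaluation multiplicativity: for f multihomogeneous of multidegree (d̄_x, d̄_y, d̄_z) with d̄_x ≤ d_x and d̄_y ≤ d_y, and for g_z homogeneous in z of degree d_z, the contraction ψ(𝟙^x_α(d_x) ⊗ 𝟙^y_α(d_y) ⊗ g_z, f) equals 𝟙^x_α(d_x − d̄_x) ⊗ 𝟙^y_α(d_y − d̄_y) ⊗ (g_z · f(α_x, α_y, z)), where f(α_x,α_y,z) is the normalized partial evaluation. -/

import Mathlib

open MvPolynomial

variable {K : Type*} [Field K] {n_x n_y n_z : ℕ}

/-- Restriction of an exponent vector to the `x` block. -/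
noncomputable def restX (θ : (Fin (n_x + 1) ⊕ Fin (n_y + 1) ⊕ Fin (n_z + 1)) →₀ ℕ) :
    Fin (n_x + 1) →₀ ℕ :=
  Finsupp.comapDomain Sum.inl θ Sum.inl_injective.injOn

/-- Restriction of an exponent vector to the `y` block. -/
noncomputable def restY (θ : (Fin (n_x + 1) ⊕ Fin (n_y + 1) ⊕ Fin (n_z + 1)) →₀ ℕ) :
    Fin (n_y + 1) →₀ ℕ :=
  Finsupp.comapDomain (Sum.inr ∘ Sum.inl) θ
    (Sum.inr_injective.comp Sum.inl_injective).injOn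

/-- Restriction of an exponent vector to the `z` block. -/
noncomputable def restZ (θ : (Fin (n_x + 1) ⊕ Fin (n_y + 1) ⊕ Fin (n_z + 1)) →₀ ℕ) :
    Fin (n_z + 1) →₀ ℕ :=
  Finsupp.comapDomain (Sum.inr ∘ Sum.inr) θ
    (Sum.inr_injective.comp Sum.inr_injective).injOn

/-- The contraction map ψ : (K[x]* ⊗ K[y]* ⊗ K[z]) × K[x,y,z] → K[x]* ⊗ K[y]* ⊗ K[z];
elements of K[x]* ⊗ K[y]* ⊗ K[z] are represented as functions of two exponent vectors
with values in K[z].  On monomials,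
ψ(∂x^{σx} ⊗ ∂y^{σy} ⊗ z^{σz}, x^{θx} y^{θy} z^{θz})
  = (x^{θx} ⋆ ∂x^{σx}) ⊗ (y^{θy} ⋆ ∂y^{σy}) ⊗ z^{θz+σz}. -/
noncomputable def psi
    (T : (Fin (n_x + 1) →₀ ℕ) → (Fin (n_y + 1) →₀ ℕ) → MvPolynomial (Fin (n_z + 1)) K)
    (f : MvPolynomial (Fin (n_x + 1) ⊕ Fin (n_y + 1) ⊕ Fin (n_z + 1)) K) :
    (Fin (n_x + 1) →₀ ℕ) → (Fin (n_y + 1) →₀ ℕ) → MvPolynomial (Fin (n_z + 1)) K :=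
  fun τx τy => ∑ θ ∈ f.support,
    f.coeff θ • (monomial (restZ θ) (1 : K) * T (τx + restX θ) (τy + restY θ))

/-- The tensor `𝟙^x_α(d_x) ⊗ 𝟙^y_α(d_y) ⊗ g_z`. -/
noncomputable def oneTensor (αx : Fin (n_x + 1) → K) (αy : Fin (n_y + 1) → K)
    (d_x d_y : ℕ) (gz : MvPolynomial (Fin (n_z + 1)) K) :
    (Fin (n_x + 1) →₀ ℕ) → (Fin (n_y + 1) →₀ ℕ) → MvPolynomial (Fin (n_z + 1)) K :=
  fun σx σy =>
    if (σx.sum fun _ e => e) = d_x ∧ (σy.sum fun _ e => e) = d_y then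
      (((σx.prod fun i e => αx i ^ e) / αx 0 ^ d_x) *
        ((σy.prod fun j e => αy j ^ e) / αy 0 ^ d_y)) • gz
    else 0

/-- `f` is multihomogeneous of multidegree `(d_x, d_y, d_z)`. -/
def IsMultiHomogeneous
    (f : MvPolynomial (Fin (n_x + 1) ⊕ Fin (n_y + 1) ⊕ Fin (n_z + 1)) K)
    (d_x d_y d_z : ℕ) : Prop :=
  ∀ σ ∈ f.support,
    (∑ i, σ (Sum.inl i)) = d_x ∧ (∑ j, σ (Sum.inr (Sum.inl j))) = d_y ∧
      (∑ l, σ (Sum.inr (Sum.inr l))) = d_z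

/-- Normalized partial evaluation `f(α_x, α_y, z) / (α_{x,0}^{d̄_x} α_{y,0}^{d̄_y})`. -/
noncomputable def partialEvalNorm (αx : Fin (n_x + 1) → K) (αy : Fin (n_y + 1) → K)
    (dbar_x dbar_y : ℕ)
    (f : MvPolynomial (Fin (n_x + 1) ⊕ Fin (n_y + 1) ⊕ Fin (n_z + 1)) K) :
    MvPolynomial (Fin (n_z + 1)) K :=
  C ((αx 0 ^ dbar_x * αy 0 ^ dbar_y)⁻¹) *
    aeval (Sum.elim (fun i => C (αx i)) (Sum.elim (fun j => C (αy j)) X)) f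


lemma sum_restX (θ : (Fin (n_x + 1) ⊕ Fin (n_y + 1) ⊕ Fin (n_z + 1)) →₀ ℕ) :
    ((restX θ).sum fun _ e => e) = ∑ i, θ (Sum.inl i) := by
  rw [Finsupp.sum_fintype _ _ (fun _ => rfl)]
  simp [restX]

lemma sum_restY (θ : (Fin (n_x + 1) ⊕ Fin (n_y + 1) ⊕ Fin (n_z + 1)) →₀ ℕ) :
    ((restY θ).sum fun _ e => e) = ∑ j, θ (Sum.inr (Sum.inl j)) := by
  rw [Finsupp.sum_fintype _ _ (fun _ => rfl)]
  simp [restY]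

lemma prod_restX (φ : Fin (n_x + 1) → K)
    (θ : (Fin (n_x + 1) ⊕ Fin (n_y + 1) ⊕ Fin (n_z + 1)) →₀ ℕ) :
    ((restX θ).prod fun i e => φ i ^ e) = ∏ i, φ i ^ θ (Sum.inl i) := by
  rw [Finsupp.prod_fintype _ _ (fun _ => pow_zero _)]
  simp [restX]

lemma prod_restY (φ : Fin (n_y + 1) → K)
    (θ : (Fin (n_x + 1) ⊕ Fin (n_y + 1) ⊕ Fin (n_z + 1)) →₀ ℕ) :
    ((restY θ).prod fun j e => φ j ^ e) = ∏ j, φ j ^ θ (Sum.inr (Sum.inl j)) := by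
  rw [Finsupp.prod_fintype _ _ (fun _ => pow_zero _)]
  simp [restY]

lemma aeval_expand (αx : Fin (n_x + 1) → K) (αy : Fin (n_y + 1) → K)
    (f : MvPolynomial (Fin (n_x + 1) ⊕ Fin (n_y + 1) ⊕ Fin (n_z + 1)) K) :
    aeval (Sum.elim (fun i => C (αx i)) (Sum.elim (fun j => C (αy j)) X)) f
      = ∑ θ ∈ f.support,
          (f.coeff θ * (∏ i, αx i ^ θ (Sum.inl i)) * ∏ j, αy j ^ θ (Sum.inr (Sum.inl j)))
            • (monomial (restZ θ) (1 : K)) := by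
  conv_lhs => rw [f.as_sum, map_sum]
  refine Finset.sum_congr rfl fun θ _ => ?_
  rw [aeval_monomial, Finsupp.prod_fintype _ _ (fun _ => pow_zero _),
    Fintype.prod_sum_type, Fintype.prod_sum_type]
  have hz : (∏ l, (Sum.elim (fun i => C (αx i)) (Sum.elim (fun j => C (αy j)) X))
      (Sum.inr (Sum.inr l)) ^ θ (Sum.inr (Sum.inr l))) = monomial (restZ θ) (1 : K) := by
    rw [monomial_eq, Finsupp.prod_fintype _ _ (fun _ => pow_zero _)]
    simp [restZ]
  rw [hz]
  simp only [Sum.elim_inl, Sum.elim_inr, ← C_pow, ← map_prod, smul_eq_C_mul,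
    algebraMap_eq, map_mul]
  ring

/-- Bilinear evaluation multiplicativity:
ψ(𝟙^x_α(d_x) ⊗ 𝟙^y_α(d_y) ⊗ g_z, f)
  = 𝟙^x_α(d_x − d̄_x) ⊗ 𝟙^y_α(d_y − d̄_y) ⊗ (g_z · f(α_x, α_y, z)). -/
theorem stmt15 (αx : Fin (n_x + 1) → K) (αy : Fin (n_y + 1) → K)
    (hx : αx 0 ≠ 0) (hy : αy 0 ≠ 0) (d_x d_y d_z dbar_x dbar_y dbar_z : ℕ)
    (hdx : dbar_x ≤ d_x) (hdy : dbar_y ≤ d_y)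
    (gz : MvPolynomial (Fin (n_z + 1)) K) (hgz : gz.IsHomogeneous d_z)
    (f : MvPolynomial (Fin (n_x + 1) ⊕ Fin (n_y + 1) ⊕ Fin (n_z + 1)) K)
    (hf : IsMultiHomogeneous f dbar_x dbar_y dbar_z) :
    psi (oneTensor αx αy d_x d_y gz) f
      = oneTensor αx αy (d_x - dbar_x) (d_y - dbar_y)
          (gz * partialEvalNorm αx αy dbar_x dbar_y f) := by
  classical
  funext τx τy
  simp only [psi, oneTensor, partialEvalNorm]
  have key : ∀ θ ∈ f.support,
      (((τx + restX θ).sum fun _ e => e) = d_x ∧ ((τy + restY θ).sum fun _ e => e) = d_y)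
      ↔ ((τx.sum fun _ e => e) = d_x - dbar_x ∧ (τy.sum fun _ e => e) = d_y - dbar_y) := by
    intro θ hθ
    obtain ⟨h1, h2, -⟩ := hf θ hθ
    rw [Finsupp.sum_add_index' (fun _ => rfl) (fun _ _ _ => rfl),
        Finsupp.sum_add_index' (fun _ => rfl) (fun _ _ _ => rfl),
        sum_restX, sum_restY, h1, h2]
    omega
  by_cases h : (τx.sum fun _ e => e) = d_x - dbar_x ∧ (τy.sum fun _ e => e) = d_y - dbar_y
  · rw [if_pos h, _root_.aeval_expand, Finset.mul_sum, Finset.mul_sum, Finset.smul_sum]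
    refine Finset.sum_congr rfl fun θ hθ => ?_
    rw [if_pos ((key θ hθ).mpr h)]
    rw [Finsupp.prod_add_index' (fun _ => pow_zero _) (fun _ _ _ => pow_add _ _ _),
        Finsupp.prod_add_index' (fun _ => pow_zero _) (fun _ _ _ => pow_add _ _ _),
        prod_restX, prod_restY]
    rw [mul_smul_comm, smul_smul, show ∀ (a : K) (p : MvPolynomial (Fin (n_z+1)) K),
      C a * p = a • p from fun a p => (smul_eq_C_mul _ _).symm, smul_smul,
      mul_smul_comm, smul_smul, mul_comm gz]
    congr 1
    have e1 : αx 0 ^ d_x = αx 0 ^ (d_x - dbar_x) * αx 0 ^ dbar_x := by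
      rw [← pow_add]; congr 1; omega
    have e2 : αy 0 ^ d_y = αy 0 ^ (d_y - dbar_y) * αy 0 ^ dbar_y := by
      rw [← pow_add]; congr 1; omega
    field_simp [e1, e2]
    rw [e1, e2]; ring
  · rw [if_neg h]
    refine Finset.sum_eq_zero fun θ hθ => ?_
    rw [if_neg (fun hc => h ((key θ hθ).mp hc)), mul_zero, smul_zero]
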